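/- Let n be a positive integer and k ≥ 2 an integer. Suppose a, b, c, d are positive integers with n³ ≤ a < b < c < d such that each of ac − n, bc − n, ad − n, and bd − n is a perfect k-th power. Then bd ≥ k^k · 2^(−k) · n^(−k) · (ac)^(k−1), i.e., (2n)^k · bd ≥ k^k · (ac)^(k−1). -/

import Mathlib

/-- Binomial-type bound: `(m+1)^k ≥ m^k + k·m^(k-1)` for `k ≥ 1`. -/
lemma aux_pow_step (m : ℕ) : ∀ k : ℕ, 1 ≤ k → m ^ k + k * m ^ (k - 1) ≤ (m + 1) ^ k := by
  intro k
  induction k with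
  | zero => omega
  | succ j ih =>
    intro _
    rcases Nat.eq_zero_or_pos j with hj | hj
    · subst hj; simp
    · have h1 := ih hj
      have e1 : m ^ (j - 1) * m = m ^ j := by
        rw [← pow_succ]; congr 1; omega
      have e2 : (m + 1) ^ (j + 1) = (m + 1) ^ j * (m + 1) := by rw [pow_succ]
      have e3 : m ^ (j + 1) = m ^ j * m := by rw [pow_succ]
      have h2 : (m ^ j + j * m ^ (j - 1)) * (m + 1) ≤ (m + 1) ^ j * (m + 1) :=
        Nat.mul_le_mul_right _ h1
      have e4 : (m ^ j + j * m ^ (j - 1)) * (m + 1)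
          = m ^ (j + 1) + (j + 1) * m ^ j + j * m ^ (j - 1) := by
        rw [e3, ← e1]; ring
      simp only [Nat.add_sub_cancel]
      linarith [h2, e4, e2, Nat.zero_le (j * m ^ (j - 1))]

/-- gap principle for negative n. If n > 0, k ≥ 2, n³ ≤ a < b < c < d and
ac − n, bc − n, ad − n, bd − n are all perfect k-th powers, then
bd ≥ k^k·2^(−k)·n^(−k)·(ac)^(k−1), i.e. (2n)^k·bd ≥ k^k·(ac)^(k−1). -/
theorem stmt_7 (k n a b c d : ℕ) (hk : 2 ≤ k) (hn : 0 < n)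
    (h1 : n ^ 3 ≤ a) (hab : a < b) (hbc : b < c) (hcd : c < d)
    (hac : ∃ x : ℕ, (a * c : ℤ) - n = (x : ℤ) ^ k)
    (hbcn : ∃ x : ℕ, (b * c : ℤ) - n = (x : ℤ) ^ k)
    (had : ∃ x : ℕ, (a * d : ℤ) - n = (x : ℤ) ^ k)
    (hbd : ∃ x : ℕ, (b * d : ℤ) - n = (x : ℤ) ^ k) :
    k ^ k * (a * c) ^ (k - 1) ≤ (2 * n) ^ k * (b * d) := by
  obtain ⟨w, hw⟩ := hac
  obtain ⟨x, hx⟩ := hbcn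
  obtain ⟨y, hy⟩ := had
  obtain ⟨z, hz⟩ := hbd
  -- convert to ℕ equalities
  have hw' : a * c = w ^ k + n := by
    have : ((a * c : ℕ) : ℤ) = ((w ^ k + n : ℕ) : ℤ) := by push_cast; linarith
    exact_mod_cast this
  have hx' : b * c = x ^ k + n := by
    have : ((b * c : ℕ) : ℤ) = ((x ^ k + n : ℕ) : ℤ) := by push_cast; linarith
    exact_mod_cast this
  have hy' : a * d = y ^ k + n := by
    have : ((a * d : ℕ) : ℤ) = ((y ^ k + n : ℕ) : ℤ) := by push_cast; linarith
    exact_mod_cast this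
  have hz' : b * d = z ^ k + n := by
    have : ((b * d : ℕ) : ℤ) = ((z ^ k + n : ℕ) : ℤ) := by push_cast; linarith
    exact_mod_cast this
  have ha1 : 1 ≤ a := le_trans (Nat.one_le_pow 3 n hn) h1
  have hc3 : 3 ≤ c := by omega
  have hna : n ≤ a := le_trans (Nat.le_self_pow (by norm_num) n) h1
  -- key product identity: ac·bd = bc·ad
  have hprod : (w ^ k + n) * (z ^ k + n) = (x ^ k + n) * (y ^ k + n) := by
    rw [← hw', ← hz', ← hx', ← hy']; ring
  have key : x ^ k * y ^ k + n * (b * c) + n * (a * d)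
      = w ^ k * z ^ k + n * (a * c) + n * (b * d) := by
    have m1 : n * (a * c) = n * w ^ k + n * n := by rw [hw']; ring
    have m2 : n * (b * c) = n * x ^ k + n * n := by rw [hx']; ring
    have m3 : n * (a * d) = n * y ^ k + n * n := by rw [hy']; ring
    have m4 : n * (b * d) = n * z ^ k + n * n := by rw [hz']; ring
    linarith [hprod, m1, m2, m3, m4]
  -- ac + bd > bc + ad
  have h5 : b * c + a * d < a * c + b * d := by
    zify
    nlinarith [mul_pos (show (0:ℤ) < (b:ℤ) - (a:ℤ) by omega)
      (show (0:ℤ) < (d:ℤ) - (c:ℤ) by omega)]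
  have h6 : n * (b * c + a * d) < n * (a * c + b * d) :=
    mul_lt_mul_of_pos_left h5 hn
  have hWZlt : w ^ k * z ^ k < x ^ k * y ^ k := by linarith [key, h6]
  have hwzlt : w * z < x * y := by
    have : (w * z) ^ k < (x * y) ^ k := by
      rw [mul_pow, mul_pow]; exact hWZlt
    exact lt_of_pow_lt_pow_left₀ k (Nat.zero_le _) this
  have h7 := aux_pow_step (w * z) k (by omega)
  have h8 : (w * z) ^ k + k * (w * z) ^ (k - 1) ≤ (x * y) ^ k :=
    le_trans h7 (Nat.pow_le_pow_left (by omega) k)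
  have hkey' : (x * y) ^ k + n * (b * c) + n * (a * d)
      = (w * z) ^ k + n * (a * c) + n * (b * d) := by
    rw [mul_pow, mul_pow]; linarith [key]
  have hacbc : a * c ≤ b * c := Nat.mul_le_mul_right c (le_of_lt hab)
  -- k (wz)^(k-1) ≤ n z^k
  have h10 : k * (w * z) ^ (k - 1) ≤ n * z ^ k := by
    have h9 : a * c + b * d ≤ b * c + a * d + z ^ k := by
      have : n ≤ a * d := by omega
      omega
    have h9' : n * (a * c + b * d) ≤ n * (b * c + a * d + z ^ k) :=
      Nat.mul_le_mul_left n h9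
    linarith [h8, hkey', h9']
  have h11 : (k * (w * z) ^ (k - 1)) ^ k ≤ (n * z ^ k) ^ k := Nat.pow_le_pow_left h10 k
  have e1 : ((w * z) ^ (k - 1)) ^ k = (w ^ k) ^ (k - 1) * (z ^ k) ^ (k - 1) := by
    calc ((w * z) ^ (k - 1)) ^ k = (w * z) ^ ((k - 1) * k) := by rw [← pow_mul]
      _ = ((w * z) ^ k) ^ (k - 1) := by rw [← pow_mul, Nat.mul_comm (k - 1) k]
      _ = (w ^ k * z ^ k) ^ (k - 1) := by rw [mul_pow]
      _ = (w ^ k) ^ (k - 1) * (z ^ k) ^ (k - 1) := by rw [mul_pow]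
  have e2 : (z ^ k) ^ k = z ^ k * (z ^ k) ^ (k - 1) := by
    have h := pow_succ' (z ^ k) (k - 1)
    rwa [show k - 1 + 1 = k from by omega] at h
  have h13 : k ^ k * ((w ^ k) ^ (k - 1) * (z ^ k) ^ (k - 1))
      ≤ n ^ k * (z ^ k * (z ^ k) ^ (k - 1)) := by
    rw [← e1, ← e2]
    calc k ^ k * ((w * z) ^ (k - 1)) ^ k
        = (k * (w * z) ^ (k - 1)) ^ k := (mul_pow k ((w * z) ^ (k - 1)) k).symm
      _ ≤ (n * z ^ k) ^ k := h11
      _ = n ^ k * (z ^ k) ^ k := mul_pow n (z ^ k) k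
  have hbdn : n < b * d := by
    have hb : a + 1 ≤ b := hab
    have hd : c + 1 ≤ d := hcd
    have := Nat.mul_le_mul hb hd
    linarith [this, hw', Nat.zero_le (w ^ k)]
  have hzpos : 0 < z ^ k := by omega
  have hzk1pos : 0 < (z ^ k) ^ (k - 1) := pow_pos hzpos _
  have h14 : k ^ k * (w ^ k) ^ (k - 1) ≤ n ^ k * z ^ k := by
    have := h13
    rw [← mul_assoc, ← mul_assoc] at this
    exact Nat.le_of_mul_le_mul_right this hzk1pos
  -- ac ≤ 2 w^k
  have hnleW : n ≤ w ^ k := by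
    have : n * 3 ≤ a * c := Nat.mul_le_mul hna hc3
    omega
  have hacw : a * c ≤ 2 * w ^ k := by omega
  have h15 : (a * c) ^ (k - 1) ≤ 2 ^ (k - 1) * (w ^ k) ^ (k - 1) := by
    calc (a * c) ^ (k - 1) ≤ (2 * w ^ k) ^ (k - 1) := Nat.pow_le_pow_left hacw _
      _ = 2 ^ (k - 1) * (w ^ k) ^ (k - 1) := by rw [mul_pow]
  calc k ^ k * (a * c) ^ (k - 1)
      ≤ k ^ k * (2 ^ (k - 1) * (w ^ k) ^ (k - 1)) := Nat.mul_le_mul_left _ h15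
    _ = 2 ^ (k - 1) * (k ^ k * (w ^ k) ^ (k - 1)) := by ring
    _ ≤ 2 ^ (k - 1) * (n ^ k * z ^ k) := Nat.mul_le_mul_left _ h14
    _ ≤ 2 ^ k * (n ^ k * (b * d)) := by
        exact Nat.mul_le_mul (Nat.pow_le_pow_right (by norm_num) (by omega))
          (Nat.mul_le_mul_left _ (by omega))
    _ = (2 * n) ^ k * (b * d) := by rw [mul_pow]; ring
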